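/- Let (n_i)_{i∈ℕ} and (m_i)_{i∈ℕ} be sequences of positive integers. The abelian groups ∏_{i∈ℕ} ℤ/n_iℤ and ∏_{i∈ℕ} ℤ/m_iℤ are isomorphic if and only if for every prime ℓ and every integer k ≥ 1 the sets {i ∈ ℕ : ℓ^k exactly divides n_i} and {i ∈ ℕ : ℓ^k exactly divides m_i} have the same cardinality (i.e., are both infinite or are finite of equal size). -/

import Mathlib

namespace S3

variable {ι ι' : Type*} {X : ι → Type*} {Y : ι' → Type*}

def piCongrAdd [∀ i, AddZeroClass (X i)] [∀ j, AddZeroClass (Y j)] (e : ι ≃ ι')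
    (f : ∀ i, X i ≃+ Y (e i)) : (∀ j, Y j) ≃+ ∀ i, X i :=
  { toEquiv := (Equiv.piCongr e fun i => (f i).toEquiv).symm
    map_add' := fun _ _ => funext fun i => map_add (f i).symm _ _ }

def piCurryAdd {κ : ι → Type*} (X : ∀ i, κ i → Type*) [∀ i j, AddZeroClass (X i j)] :
    (∀ x : Σ i, κ i, X x.1 x.2) ≃+ ∀ i, ∀ j, X i j :=
  { toEquiv := Equiv.piCurry X
    map_add' := fun _ _ => rfl }

noncomputable def crtEquiv (N : ℕ) (hN : N ≠ 0) :
    ZMod N ≃+* ∀ p : N.primeFactors, ZMod ((p : ℕ) ^ N.factorization p) := by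
  have hprod : (∏ p : N.primeFactors, (p : ℕ) ^ N.factorization p) = N := by
    rw [Finset.prod_coe_sort (f := fun p => p ^ N.factorization p)]
    rw [← Nat.support_factorization]
    exact Nat.factorization_prod_pow_eq_self hN
  have coprime : Pairwise (Function.onFun Nat.Coprime
      fun p : N.primeFactors => (p : ℕ) ^ N.factorization p) := by
    intro p q hpq
    have hp := Nat.prime_of_mem_primeFactors p.2
    have hq := Nat.prime_of_mem_primeFactors q.2
    have hne : (p : ℕ) ≠ (q : ℕ) := fun h => hpq (Subtype.ext h)
    exact Nat.Coprime.pow _ _ ((Nat.coprime_primes hp hq).mpr hne)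
  exact (ZMod.ringEquivCongr hprod.symm).trans (ZMod.prodEquivPi _ coprime)

/-- The index type of prime powers. -/
abbrev PP : Type := {q : ℕ × ℕ // q.1.Prime ∧ 1 ≤ q.2}

/-- Indices where `q` exactly divides `n i`. -/
abbrev SIdx (n : ℕ → ℕ+) (q : PP) : Type :=
  {i : ℕ // q.1.1 ^ q.1.2 ∣ (n i : ℕ) ∧ ¬ q.1.1 ^ (q.1.2 + 1) ∣ (n i : ℕ)}

def sigmaEquiv (n : ℕ → ℕ+) :
    (Σ i : ℕ, ((n i : ℕ).primeFactors : Finset ℕ)) ≃ (Σ q : PP, SIdx n q) where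
  toFun x :=
    ⟨⟨((x.2 : ℕ), (n x.1 : ℕ).factorization x.2), Nat.prime_of_mem_primeFactors x.2.2,
        Nat.Prime.factorization_pos_of_dvd (Nat.prime_of_mem_primeFactors x.2.2)
          (n x.1).ne_zero (Nat.dvd_of_mem_primeFactors x.2.2)⟩,
      ⟨x.1, Nat.ordProj_dvd _ _,
        Nat.pow_succ_factorization_not_dvd (n x.1).ne_zero
          (Nat.prime_of_mem_primeFactors x.2.2)⟩⟩
  invFun y :=
    ⟨y.2, ⟨y.1.1.1, Nat.mem_primeFactors.mpr ⟨y.1.2.1,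
      dvd_trans (dvd_pow_self _ (by have := y.1.2.2; omega)) y.2.2.1, (n y.2).ne_zero⟩⟩⟩
  left_inv x := rfl
  right_inv := by
    rintro ⟨⟨⟨l, k⟩, hl, hk⟩, ⟨i, h1, h2⟩⟩
    have hn : (n i : ℕ) ≠ 0 := (n i).ne_zero
    have hv : (n i : ℕ).factorization l = k := by
      refine le_antisymm ?_ ((Nat.Prime.pow_dvd_iff_le_factorization hl hn).mp h1)
      by_contra hlt
      push_neg at hlt
      exact h2 ((Nat.Prime.pow_dvd_iff_le_factorization hl hn).mpr hlt)
    subst hv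
    rfl

/-- Canonical form of a product of cyclic groups. -/
noncomputable def canon (n : ℕ → ℕ+) :
    (∀ i : ℕ, ZMod (n i)) ≃+ ∀ q : PP, (SIdx n q → ZMod (q.1.1 ^ q.1.2)) :=
  (AddEquiv.piCongrRight fun i => (crtEquiv (n i) (n i).ne_zero).toAddEquiv).trans <|
    ((piCurryAdd fun i (p : ((n i : ℕ).primeFactors : Finset ℕ)) =>
        ZMod ((p : ℕ) ^ (n i : ℕ).factorization p)).symm.trans <|
      ((piCongrAdd (sigmaEquiv n) fun _ => AddEquiv.refl _).symm.trans
        (piCurryAdd fun q (_ : SIdx n q) => ZMod (q.1.1 ^ q.1.2))))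


variable {G H : Type*} [AddCommGroup G] [AddCommGroup H]

/-- Multiplication by `c` as an `AddMonoidHom`. -/
def shom (G : Type*) [AddCommGroup G] (c : ℕ) : G →+ G :=
  AddMonoidHom.mk' (fun x => c • x) fun a b => nsmul_add a b c

/-- The subgroup `(ℓ^j G)[ℓ]`. -/
def TT (G : Type*) [AddCommGroup G] (ℓ j : ℕ) : AddSubgroup G :=
  (shom G (ℓ ^ j)).range ⊓ (shom G ℓ).ker

lemma mem_TT {ℓ j : ℕ} {x : G} :
    x ∈ TT G ℓ j ↔ (∃ y, ℓ ^ j • y = x) ∧ ℓ • x = 0 := by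
  simp [TT, AddSubgroup.mem_inf, AddMonoidHom.mem_range, AddMonoidHom.mem_ker, shom,
    AddMonoidHom.mk'_apply]

/-- The invariant quotient `(ℓ^j G)[ℓ] / (ℓ^(j+1) G)[ℓ]`. -/
def QQ (G : Type*) [AddCommGroup G] (ℓ j : ℕ) : Type _ :=
  (TT G ℓ j) ⧸ ((TT G ℓ (j + 1)).addSubgroupOf (TT G ℓ j))

noncomputable instance (ℓ j : ℕ) : AddGroup (QQ G ℓ j) :=
  QuotientAddGroup.Quotient.addGroup _

lemma map_TT (e : G ≃+ H) (ℓ j : ℕ) :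
    (TT G ℓ j).map e.toAddMonoidHom = TT H ℓ j := by
  ext x
  simp only [AddSubgroup.mem_map, mem_TT, AddEquiv.coe_toAddMonoidHom]
  constructor
  · rintro ⟨y, ⟨⟨z, hz⟩, hy0⟩, rfl⟩
    exact ⟨⟨e z, by rw [← map_nsmul, hz]⟩, by rw [← map_nsmul, hy0, map_zero]⟩
  · rintro ⟨⟨z, hz⟩, h0⟩
    refine ⟨e.symm x, ⟨⟨e.symm z, ?_⟩, ?_⟩, e.apply_symm_apply x⟩
    · rw [← map_nsmul, hz]
    · rw [← map_nsmul, h0, map_zero]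

lemma mem_TT_of_equiv (e : G ≃+ H) {ℓ j : ℕ} {x : G} (hx : x ∈ TT G ℓ j) :
    e x ∈ TT H ℓ j := by
  rw [← map_TT e ℓ j]
  exact AddSubgroup.mem_map_of_mem _ hx

/-- Transport of the invariant along an isomorphism. -/
noncomputable def QQcongr (e : G ≃+ H) (ℓ j : ℕ) : QQ G ℓ j ≃+ QQ H ℓ j := by
  refine QuotientAddGroup.congr _ _
    ((e.addSubgroupMap (TT G ℓ j)).trans (AddEquiv.addSubgroupCongr (map_TT e ℓ j))) ?_
  ext x
  simp only [AddSubgroup.mem_map, AddSubgroup.mem_addSubgroupOf]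
  constructor
  · rintro ⟨y, hy, rfl⟩
    exact mem_TT_of_equiv e hy
  · intro hx
    refine ⟨⟨e.symm (x : H), by simpa using mem_TT_of_equiv e.symm x.2⟩,
      by simpa using mem_TT_of_equiv e.symm hx, ?_⟩
    exact Subtype.ext (e.apply_symm_apply (x : H))



section toTor
variable {A : Type*} [AddCommMonoid A] {ℓ : ℕ} [NeZero ℓ] {a : A}

omit [NeZero ℓ] in
lemma mod_nsmul (ha : ℓ • a = 0) (x : ℕ) : (x % ℓ) • a = x • a := by
  conv_rhs => rw [← Nat.div_add_mod x ℓ]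
  rw [add_nsmul, mul_nsmul, ha, smul_zero, zero_add]

/-- The hom `ZMod ℓ →+ A` sending `1` to an `ℓ`-torsion element `a`. -/
def toTor (ℓ : ℕ) [NeZero ℓ] (a : A) (ha : ℓ • a = 0) : ZMod ℓ →+ A where
  toFun c := c.val • a
  map_zero' := by simp
  map_add' c d := by
    show (c + d).val • a = c.val • a + d.val • a
    rw [ZMod.val_add, mod_nsmul ha, add_nsmul]

lemma toTor_natCast (ha : ℓ • a = 0) (c : ℕ) : toTor ℓ a ha (c : ZMod ℓ) = c • a := by
  show ((c : ZMod ℓ).val) • a = c • a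
  rw [ZMod.val_natCast]
  exact mod_nsmul ha c

lemma toTor_eq_zero_iff (ha : ℓ • a = 0) (hord : addOrderOf a = ℓ) (c : ZMod ℓ) :
    toTor ℓ a ha c = 0 ↔ c = 0 := by
  constructor
  · intro h
    have hdvd : addOrderOf a ∣ c.val := addOrderOf_dvd_of_nsmul_eq_zero h
    rw [hord] at hdvd
    have := Nat.eq_zero_of_dvd_of_lt hdvd (ZMod.val_lt c)
    exact (ZMod.val_eq_zero c).mp this
  · rintro rfl
    show (0 : ZMod ℓ).val • a = 0
    simp
end toTor

section gen
variable (ℓ : ℕ) [NeZero ℓ]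

/-- Generator of the `ℓ`-torsion of `ZMod N`. -/
def gen (N : ℕ) : ZMod N := ((N / ℓ : ℕ) : ZMod N)

variable {N : ℕ} [NeZero N]

omit [NeZero ℓ] [NeZero N] in
lemma ell_smul_gen (hd : ℓ ∣ N) : ℓ • gen ℓ N = 0 := by
  have h : (ℓ * (N / ℓ) : ℕ) = N := Nat.mul_div_cancel' hd
  rw [gen, nsmul_eq_mul, ← Nat.cast_mul, h, ZMod.natCast_self]

omit [NeZero ℓ] in
lemma addOrderOf_gen (hd : ℓ ∣ N) : addOrderOf (gen ℓ N) = ℓ := by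
  have hN : N ≠ 0 := NeZero.ne N
  rw [gen, ZMod.addOrderOf_coe _ hN, Nat.gcd_eq_right (Nat.div_dvd_of_dvd hd),
    Nat.div_div_self hd hN]

lemma torsion_eq (hd : ℓ ∣ N) {x : ZMod N} (hx : ℓ • x = 0) :
    ∃ c : ℕ, x = c • gen ℓ N := by
  have hℓ0 : 0 < ℓ := Nat.pos_of_ne_zero (NeZero.ne ℓ)
  have hval : ((ℓ * x.val : ℕ) : ZMod N) = 0 := by
    rw [Nat.cast_mul, ZMod.natCast_val, ZMod.cast_id, ← nsmul_eq_mul, hx]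
  have hdvd : N ∣ ℓ * x.val := (ZMod.natCast_eq_zero_iff _ _).mp hval
  obtain ⟨c, hc⟩ := hdvd
  have h1 : ℓ * ((N / ℓ) * c) = ℓ * x.val := by
    rw [← mul_assoc, Nat.mul_div_cancel' hd, hc]
  have h2 : x.val = (N / ℓ) * c := (Nat.eq_of_mul_eq_mul_left hℓ0 h1).symm
  refine ⟨c, ?_⟩
  rw [gen, nsmul_eq_mul, ← Nat.cast_mul, mul_comm, ← h2, ZMod.natCast_val, ZMod.cast_id]

omit [NeZero N] in
lemma gen_div_eq {j : ℕ} (hd : ℓ ^ (j + 1) ∣ N) (c : ℕ) :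
    ℓ ^ j • (c • ((N / ℓ ^ (j + 1) : ℕ) : ZMod N)) = c • gen ℓ N := by
  have hℓ0 : 0 < ℓ := Nat.pos_of_ne_zero (NeZero.ne ℓ)
  obtain ⟨t, ht⟩ := hd
  have hkey : (ℓ ^ j) * (N / ℓ ^ (j + 1)) = N / ℓ := by
    subst ht
    rw [Nat.mul_div_cancel_left t (pow_pos hℓ0 _), pow_succ', mul_assoc,
      Nat.mul_div_cancel_left _ hℓ0]
  rw [smul_comm]
  congr 1
  rw [nsmul_eq_mul, ← Nat.cast_mul, hkey]
  rfl

omit [NeZero ℓ] [NeZero N] in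
lemma not_divisible {j : ℕ} (hℓ : ℓ.Prime) (hd : ¬ ℓ ^ (j + 1) ∣ N) {x y : ZMod N}
    (h1 : ℓ • x = 0) (h2 : ℓ ^ j • y = x) : x = 0 := by
  have hordN : addOrderOf y ∣ N := by
    apply addOrderOf_dvd_of_nsmul_eq_zero
    rw [nsmul_eq_mul, ZMod.natCast_self, zero_mul]
  have hordP : addOrderOf y ∣ ℓ ^ (j + 1) := by
    apply addOrderOf_dvd_of_nsmul_eq_zero
    rw [pow_succ, mul_nsmul, h2, h1]
  obtain ⟨s, hs, hord⟩ := (Nat.dvd_prime_pow hℓ).mp hordP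
  rcases Nat.lt_or_ge s (j + 1) with hlt | hge
  · have hdvd : addOrderOf y ∣ ℓ ^ j := hord ▸ pow_dvd_pow ℓ (by omega)
    obtain ⟨t, ht⟩ := hdvd
    have hy : ℓ ^ j • y = 0 := by
      rw [ht, mul_nsmul, addOrderOf_nsmul_eq_zero, smul_zero]
    rw [← h2, hy]
  · have hs' : s = j + 1 := le_antisymm hs hge
    subst hs'
    rw [hord] at hordN
    exact absurd hordN hd

end gen

section Phi
variable (ℓ j : ℕ) [NeZero ℓ] (n : ℕ → ℕ+)

instance (i : ℕ) : NeZero ((n i : ℕ)) := ⟨(n i).ne_zero⟩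

/-- Indices whose entry is divisible by `ℓ^(j+1)`. -/
abbrev Bt : Type := {i : ℕ // ℓ ^ (j + 1) ∣ (n i : ℕ)}

/-- Indices whose entry is exactly divisible by `ℓ^(j+1)`. -/
abbrev St : Type := {i : ℕ // ℓ ^ (j + 1) ∣ (n i : ℕ) ∧ ¬ ℓ ^ (j + 1 + 1) ∣ (n i : ℕ)}

lemma ell_dvd {i : ℕ} (h : ℓ ^ (j + 1) ∣ (n i : ℕ)) : ℓ ∣ (n i : ℕ) :=
  dvd_trans (dvd_pow_self ℓ (Nat.succ_ne_zero j)) h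

/-- The embedding of `(F_ℓ)^(Bt)` into `∏ ZMod (n i)`. -/
noncomputable def Phi : (Bt ℓ j n → ZMod ℓ) →+ ∀ i : ℕ, ZMod (n i) :=
  AddMonoidHom.mk'
    (fun f i => if h : ℓ ^ (j + 1) ∣ (n i : ℕ) then
      toTor ℓ (gen ℓ (n i)) (ell_smul_gen ℓ (ell_dvd ℓ j n h)) (f ⟨i, h⟩) else 0)
    (by
      intro f g
      funext i
      simp only [Pi.add_apply]
      split_ifs with h
      · exact map_add (toTor ℓ (gen ℓ (n i)) (ell_smul_gen ℓ (ell_dvd ℓ j n h)))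
          (f ⟨i, h⟩) (g ⟨i, h⟩)
      · simp)

lemma Phi_apply_pos (f : Bt ℓ j n → ZMod ℓ) {i : ℕ} (h : ℓ ^ (j + 1) ∣ (n i : ℕ)) :
    Phi ℓ j n f i = toTor ℓ (gen ℓ (n i)) (ell_smul_gen ℓ (ell_dvd ℓ j n h)) (f ⟨i, h⟩) :=
  dif_pos h

lemma Phi_apply_neg (f : Bt ℓ j n → ZMod ℓ) {i : ℕ} (h : ¬ ℓ ^ (j + 1) ∣ (n i : ℕ)) :
    Phi ℓ j n f i = 0 := dif_neg h

lemma ell_smul_Phi (f : Bt ℓ j n → ZMod ℓ) : ℓ • Phi ℓ j n f = 0 := by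
  funext i
  show ℓ • Phi ℓ j n f i = 0
  by_cases h : ℓ ^ (j + 1) ∣ (n i : ℕ)
  · rw [Phi_apply_pos ℓ j n f h]
    show ℓ • ((f ⟨i, h⟩).val • gen ℓ (n i)) = 0
    rw [smul_comm, ell_smul_gen ℓ (ell_dvd ℓ j n h), smul_zero]
  · rw [Phi_apply_neg ℓ j n f h, smul_zero]

lemma Phi_injective : Function.Injective (Phi ℓ j n) := by
  intro f g hfg
  funext b
  have h := congrFun hfg b.1
  rw [Phi_apply_pos ℓ j n f b.2, Phi_apply_pos ℓ j n g b.2] at h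
  have : toTor ℓ (gen ℓ (n b.1)) (ell_smul_gen ℓ (ell_dvd ℓ j n b.2)) (f ⟨b.1, b.2⟩ - g ⟨b.1, b.2⟩) = 0 := by
    rw [map_sub, h, sub_self]
  have h0 := (toTor_eq_zero_iff _ (addOrderOf_gen ℓ (ell_dvd ℓ j n b.2)) _).mp this
  have := sub_eq_zero.mp h0
  simpa using this

lemma range_Phi (hℓ : ℓ.Prime) :
    (Phi ℓ j n).range = TT (∀ i : ℕ, ZMod (n i)) ℓ j := by
  ext x
  rw [AddMonoidHom.mem_range, mem_TT]
  constructor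
  · rintro ⟨f, rfl⟩
    refine ⟨⟨fun i => if h : ℓ ^ (j + 1) ∣ (n i : ℕ) then
        (f ⟨i, h⟩).val • ((((n i : ℕ) / ℓ ^ (j + 1) : ℕ)) : ZMod (n i)) else 0, ?_⟩,
      ell_smul_Phi ℓ j n f⟩
    funext i
    show ℓ ^ j • _ = Phi ℓ j n f i
    dsimp only
    by_cases h : ℓ ^ (j + 1) ∣ (n i : ℕ)
    · rw [dif_pos h, gen_div_eq ℓ h, Phi_apply_pos ℓ j n f h]
      rfl
    · rw [dif_neg h, smul_zero, Phi_apply_neg ℓ j n f h]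
  · rintro ⟨⟨y, hy⟩, h0⟩
    have tor : ∀ b : Bt ℓ j n, ∃ c : ℕ, x b.1 = c • gen ℓ (n b.1) := fun b =>
      torsion_eq ℓ (ell_dvd ℓ j n b.2) (congrFun h0 b.1)
    choose c hc using tor
    refine ⟨fun b => (c b : ZMod ℓ), ?_⟩
    funext i
    by_cases h : ℓ ^ (j + 1) ∣ (n i : ℕ)
    · rw [Phi_apply_pos ℓ j n _ h, toTor_natCast]
      exact (hc ⟨i, h⟩).symm
    · rw [Phi_apply_neg ℓ j n _ h]
      exact (not_divisible ℓ hℓ h (congrFun h0 i) (congrFun hy i)).symm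

lemma Phi_mem_TT_succ (hℓ : ℓ.Prime) (f : Bt ℓ j n → ZMod ℓ) :
    Phi ℓ j n f ∈ TT (∀ i : ℕ, ZMod (n i)) ℓ (j + 1) ↔
      ∀ (i : ℕ) (h : ℓ ^ (j + 1) ∣ (n i : ℕ) ∧ ¬ ℓ ^ (j + 1 + 1) ∣ (n i : ℕ)),
        f ⟨i, h.1⟩ = 0 := by
  rw [mem_TT]
  constructor
  · rintro ⟨⟨y, hy⟩, h0⟩ i h
    have hx0 : Phi ℓ j n f i = 0 :=
      not_divisible ℓ hℓ h.2 (congrFun h0 i) (congrFun hy i)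
    rw [Phi_apply_pos ℓ j n f h.1] at hx0
    exact (toTor_eq_zero_iff _ (addOrderOf_gen ℓ (ell_dvd ℓ j n h.1)) _).mp hx0
  · intro hf
    refine ⟨⟨fun i => if h : ℓ ^ (j + 1 + 1) ∣ (n i : ℕ) then
        (f ⟨i, dvd_trans (pow_dvd_pow ℓ (Nat.le_succ _)) h⟩).val •
          ((((n i : ℕ) / ℓ ^ (j + 1 + 1) : ℕ)) : ZMod (n i)) else 0, ?_⟩,
      ell_smul_Phi ℓ j n f⟩
    funext i
    show ℓ ^ (j + 1) • _ = Phi ℓ j n f i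
    dsimp only
    by_cases h : ℓ ^ (j + 1 + 1) ∣ (n i : ℕ)
    · have hB : ℓ ^ (j + 1) ∣ (n i : ℕ) := dvd_trans (pow_dvd_pow ℓ (Nat.le_succ _)) h
      rw [dif_pos h, gen_div_eq ℓ h, Phi_apply_pos ℓ j n f hB]
      rfl
    · rw [dif_neg h, smul_zero]
      by_cases hB : ℓ ^ (j + 1) ∣ (n i : ℕ)
      · rw [Phi_apply_pos ℓ j n f hB, hf i ⟨hB, h⟩, map_zero]
      · rw [Phi_apply_neg ℓ j n f hB]

end Phi

section QQcalc
variable (ℓ j : ℕ) [NeZero ℓ] (n : ℕ → ℕ+)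

/-- `(F_ℓ)^(Bt)` is isomorphic to `T_j`. -/
noncomputable def EE (hℓ : ℓ.Prime) :
    (Bt ℓ j n → ZMod ℓ) ≃+ TT (∀ i : ℕ, ZMod (n i)) ℓ j :=
  (AddMonoidHom.ofInjective (Phi_injective ℓ j n)).trans
    (AddEquiv.addSubgroupCongr (range_Phi ℓ j n hℓ))

lemma EE_coe (hℓ : ℓ.Prime) (f : Bt ℓ j n → ZMod ℓ) :
    ((EE ℓ j n hℓ f : TT (∀ i : ℕ, ZMod (n i)) ℓ j) : ∀ i : ℕ, ZMod (n i)) = Phi ℓ j n f :=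
  rfl

lemma Phi_EEsymm (hℓ : ℓ.Prime) (x : TT (∀ i : ℕ, ZMod (n i)) ℓ j) :
    Phi ℓ j n ((EE ℓ j n hℓ).symm x) = (x : ∀ i : ℕ, ZMod (n i)) := by
  rw [← EE_coe ℓ j n hℓ ((EE ℓ j n hℓ).symm x), (EE ℓ j n hℓ).apply_symm_apply]

/-- Restriction to exactly-divisible indices. -/
def Res : (Bt ℓ j n → ZMod ℓ) →+ (St ℓ j n → ZMod ℓ) :=
  AddMonoidHom.mk' (fun f s => f ⟨s.1, s.2.1⟩) (fun _ _ => rfl)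

lemma Res_surjective : Function.Surjective (Res ℓ j n) := by
  intro g
  refine ⟨fun b => if h : ¬ ℓ ^ (j + 1 + 1) ∣ (n b.1 : ℕ) then g ⟨b.1, ⟨b.2, h⟩⟩ else 0, ?_⟩
  funext s
  show (if h : ¬ ℓ ^ (j + 1 + 1) ∣ (n s.1 : ℕ) then g ⟨s.1, ⟨s.2.1, h⟩⟩ else 0) = g s
  rw [dif_pos s.2.2]

noncomputable def pihom (hℓ : ℓ.Prime) :
    TT (∀ i : ℕ, ZMod (n i)) ℓ j →+ (St ℓ j n → ZMod ℓ) :=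
  (Res ℓ j n).comp (EE ℓ j n hℓ).symm.toAddMonoidHom

lemma pihom_surjective (hℓ : ℓ.Prime) : Function.Surjective (pihom ℓ j n hℓ) :=
  (Res_surjective ℓ j n).comp (EE ℓ j n hℓ).symm.surjective

lemma ker_pihom (hℓ : ℓ.Prime) :
    (pihom ℓ j n hℓ).ker =
      (TT (∀ i : ℕ, ZMod (n i)) ℓ (j + 1)).addSubgroupOf (TT (∀ i : ℕ, ZMod (n i)) ℓ j) := by
  ext x
  rw [AddMonoidHom.mem_ker, AddSubgroup.mem_addSubgroupOf, ← Phi_EEsymm ℓ j n hℓ x,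
    Phi_mem_TT_succ ℓ j n hℓ]
  constructor
  · intro h i hi
    exact congrFun h ⟨i, hi⟩
  · intro h
    funext s
    exact h s.1 s.2

/-- Computation of the invariant for a product of cyclic groups. -/
noncomputable def QQiso (hℓ : ℓ.Prime) :
    QQ (∀ i : ℕ, ZMod (n i)) ℓ j ≃+ (St ℓ j n → ZMod ℓ) :=
  (QuotientAddGroup.quotientAddEquivOfEq (ker_pihom ℓ j n hℓ).symm).trans
    (QuotientAddGroup.quotientKerEquivOfSurjective _ (pihom_surjective ℓ j n hℓ))

end QQcalc

section Card

lemma pow_card_inj {c : ℕ} (hc : 2 ≤ c) {a b : Cardinal.{0}}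
    (ha : a ≤ Cardinal.aleph0) (hb : b ≤ Cardinal.aleph0)
    (h : (c : Cardinal) ^ a = (c : Cardinal) ^ b) : a = b := by
  have hkey : ∀ x y : Cardinal, x ≤ Cardinal.aleph0 → ¬ x < Cardinal.aleph0 →
      y < Cardinal.aleph0 → (c : Cardinal) ^ y ≠ (c : Cardinal) ^ x := by
    intro x y hx hx' hy
    have hxa : x = Cardinal.aleph0 := le_antisymm hx (not_lt.mp hx')
    have h1 : (c : Cardinal) ^ y < Cardinal.aleph0 :=
      Cardinal.power_lt_aleph0 (Cardinal.nat_lt_aleph0 c) hy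
    have h2 : Cardinal.aleph0 < (c : Cardinal) ^ x := by
      rw [hxa]
      calc Cardinal.aleph0 < 2 ^ Cardinal.aleph0 := Cardinal.cantor _
        _ ≤ (c : Cardinal) ^ Cardinal.aleph0 := by
            apply Cardinal.power_le_power_right
            exact_mod_cast Nat.cast_le.mpr hc
    exact ne_of_lt (h1.trans h2)
  by_cases ha' : a < Cardinal.aleph0 <;> by_cases hb' : b < Cardinal.aleph0
  · obtain ⟨a', rfl⟩ := Cardinal.lt_aleph0.mp ha'
    obtain ⟨b', rfl⟩ := Cardinal.lt_aleph0.mp hb'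
    rw [Cardinal.power_natCast, Cardinal.power_natCast, ← Nat.cast_pow, ← Nat.cast_pow,
      Nat.cast_inj] at h
    exact congrArg (Nat.cast : ℕ → Cardinal.{0}) (Nat.pow_right_injective hc h)
  · exact absurd h (hkey b a hb hb' ha')
  · exact absurd h.symm (hkey a b ha ha' hb')
  · rw [le_antisymm ha (not_lt.mp ha'), le_antisymm hb (not_lt.mp hb')]

lemma card_of_fun_card {ℓ : ℕ} (hℓ : 2 ≤ ℓ) {A B : Type} [Countable A] [Countable B]
    (h : Cardinal.mk (A → ZMod ℓ) = Cardinal.mk (B → ZMod ℓ)) :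
    Cardinal.mk A = Cardinal.mk B := by
  haveI : NeZero ℓ := ⟨by omega⟩
  have hz : Cardinal.mk (ZMod ℓ) = (ℓ : Cardinal) := by
    rw [Cardinal.mk_fintype, ZMod.card]
  rw [← Cardinal.power_def, ← Cardinal.power_def, hz] at h
  exact pow_card_inj hℓ (Cardinal.mk_le_aleph0) (Cardinal.mk_le_aleph0) h

end Card

end S3

/-- Let `(n_i)` and `(m_i)` be sequences of positive integers. The abelian
groups `∏_i ℤ/n_iℤ` and `∏_i ℤ/m_iℤ` are isomorphic if and only if for every prime `ℓ` and
every `k ≥ 1`, the sets of indices `i` such that `ℓ^k` exactly divides `n_i` resp. `m_i` have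
the same cardinality. -/
theorem statement3 (n m : ℕ → ℕ+) :
    Nonempty ((∀ i : ℕ, ZMod (n i)) ≃+ ∀ i : ℕ, ZMod (m i)) ↔
      ∀ ℓ : ℕ, ℓ.Prime → ∀ k : ℕ, 1 ≤ k →
        Cardinal.mk {i : ℕ // ℓ ^ k ∣ (n i : ℕ) ∧ ¬ ℓ ^ (k + 1) ∣ (n i : ℕ)} =
          Cardinal.mk {i : ℕ // ℓ ^ k ∣ (m i : ℕ) ∧ ¬ ℓ ^ (k + 1) ∣ (m i : ℕ)} := by
  constructor
  · rintro ⟨e⟩ ℓ hℓ k hk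
    obtain ⟨j, rfl⟩ : ∃ j, k = j + 1 := ⟨k - 1, by omega⟩
    haveI : NeZero ℓ := ⟨hℓ.ne_zero⟩
    have iso : (S3.St ℓ j n → ZMod ℓ) ≃+ (S3.St ℓ j m → ZMod ℓ) :=
      ((S3.QQiso ℓ j n hℓ).symm.trans (S3.QQcongr e ℓ j)).trans (S3.QQiso ℓ j m hℓ)
    exact S3.card_of_fun_card hℓ.two_le (Cardinal.mk_congr iso.toEquiv)
  · intro h
    have eqs : ∀ q : S3.PP, S3.SIdx n q ≃ S3.SIdx m q := fun q =>
      Classical.choice (Cardinal.eq.mp (h q.1.1 q.2.1 q.1.2 q.2.2))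
    exact ⟨(S3.canon n).trans ((AddEquiv.piCongrRight fun q =>
      (S3.piCongrAdd (eqs q) fun _ => AddEquiv.refl (ZMod (q.1.1 ^ q.1.2))).symm).trans
      (S3.canon m).symm)⟩
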